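/- In the periodic 1D setting, the training variance of the Local Mixup minimizer, Var(f_K) = (1/n)·Σ_{i ∈ ℤ/nℤ} (f_K(i) − (1/n)·Σ_{j ∈ ℤ/nℤ} f_K(j))², converges to 0 as K → ∞. -/

import Mathlib

/-- The training mean `E[y] = (1/n)·Σ_{i ∈ ℤ/nℤ} y_i`. -/
noncomputable def trainMean (n : ℕ) [NeZero n] (y : ZMod n → ℝ) : ℝ :=
  (1 / (n : ℝ)) * ∑ i, y i

/-- `A_K(i) = (1/K)·Σ_{k=1}^{K−1} ((K−k)·y_{i−k} + k·y_{i+K−k})` (so `A_1(i) = 0`). -/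
noncomputable def mixA (n : ℕ) (y : ZMod n → ℝ) (i : ZMod n) (K : ℕ) : ℝ :=
  (1 / (K : ℝ)) * ∑ k ∈ Finset.Icc 1 (K - 1),
    (((K : ℝ) - (k : ℝ)) * y (i - (k : ZMod n)) + (k : ℝ) * y (i + ((K - k : ℕ) : ZMod n)))

/-- `S_1(i) = 0` and `S_{K+1}(i) = S_K(i) + A_{K+1}(i)`. -/
noncomputable def mixS (n : ℕ) (y : ZMod n → ℝ) (i : ZMod n) : ℕ → ℝ
  | 0 => 0
  | K + 1 => mixS n y i K + mixA n y i (K + 1)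

/-- The Local Mixup minimizer `f_K(i) = (2/(K·(K+3)))·(2K·y_i + S_K(i))`. -/
noncomputable def mixF (n : ℕ) (y : ZMod n → ℝ) (K : ℕ) (i : ZMod n) : ℝ :=
  (2 / ((K : ℝ) * ((K : ℝ) + 3))) * (2 * (K : ℝ) * y i + mixS n y i K)

/-- Training variance `Var(f) = (1/n)·Σ_i (f(i) − (1/n)·Σ_j f(j))²`. -/
noncomputable def trainVar (n : ℕ) [NeZero n] (f : ZMod n → ℝ) : ℝ :=
  (1 / (n : ℝ)) * ∑ i, (f i - (1 / (n : ℝ)) * ∑ j, f j) ^ 2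

open Finset

section aux
variable {n : ℕ} [NeZero n]

omit [NeZero n] in
lemma cast_inj_of_lt {a b : ℕ} (ha : a < n) (hb : b < n) (h : (a : ZMod n) = (b : ZMod n)) :
    a = b := by
  have := congrArg ZMod.val h
  rwa [ZMod.val_cast_of_lt ha, ZMod.val_cast_of_lt hb] at this

lemma sum_shift (g : ZMod n → ℝ) (c : ZMod n) : ∑ x : ZMod n, g (c + x) = ∑ x, g x :=
  Fintype.sum_equiv (Equiv.addLeft c) _ _ (fun _ => rfl)

lemma sum_range_univ (h : ZMod n → ℝ) : ∑ i ∈ range n, h (i : ZMod n) = ∑ x, h x := by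
  exact Finset.sum_bij' (fun i _ => (i : ZMod n)) (fun x _ => x.val)
    (fun a _ => Finset.mem_univ _) (fun x _ => Finset.mem_range.2 (ZMod.val_lt x))
    (fun a ha => ZMod.val_cast_of_lt (Finset.mem_range.1 ha))
    (fun x _ => ZMod.natCast_rightInverse x) (fun a _ => rfl)

lemma full_period (g : ZMod n → ℝ) (hg : ∑ x, g x = 0) (w : ZMod n) :
    ∑ k ∈ range n, g (w + (k : ZMod n)) = 0 := by
  rw [sum_range_univ (fun x => g (w + x)), sum_shift, hg]

end aux

section psums
variable {n : ℕ} [NeZero n]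

/-- partial sums of a periodic sequence -/
noncomputable def Pp (g : ZMod n → ℝ) (i : ZMod n) (m : ℕ) : ℝ :=
  ∑ j ∈ range m, g (i + 1 + (j : ZMod n))

lemma Pp_period (g : ZMod n → ℝ) (hg : ∑ x, g x = 0) (i : ZMod n) (m : ℕ) :
    Pp g i (m + n) = Pp g i m := by
  unfold Pp
  rw [Finset.sum_range_add]
  have h2 : ∑ j ∈ range n, g (i + 1 + ((m + j : ℕ) : ZMod n)) = 0 := by
    have := full_period g hg (i + 1 + (m : ZMod n))
    rw [← this]
    apply Finset.sum_congr rfl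
    intro j _
    push_cast
    ring_nf
  rw [h2, add_zero]

lemma Pp_bound_small (g : ZMod n → ℝ) (i : ZMod n) {m : ℕ} (hm : m ≤ n) :
    |Pp g i m| ≤ ∑ x, |g x| := by
  refine (Finset.abs_sum_le_sum_abs _ _).trans ?_
  have hinj : ∀ a ∈ range m, ∀ b ∈ range m,
      (fun k : ℕ => i + 1 + (k : ZMod n)) a = (fun k : ℕ => i + 1 + (k : ZMod n)) b → a = b := by
    intro a ha b hb h
    simp only [add_right_inj] at h
    exact cast_inj_of_lt (lt_of_lt_of_le (Finset.mem_range.1 ha) hm)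
      (lt_of_lt_of_le (Finset.mem_range.1 hb) hm) h
  rw [show (∑ j ∈ range m, |g (i + 1 + (j : ZMod n))|)
      = ∑ x ∈ (range m).image (fun k : ℕ => i + 1 + (k : ZMod n)), |g x| from
    (Finset.sum_image (f := fun x => |g x|) hinj).symm]
  exact Finset.sum_le_sum_of_subset_of_nonneg (Finset.subset_univ _)
    (fun x _ _ => abs_nonneg _)

lemma Pp_bound (g : ZMod n → ℝ) (hg : ∑ x, g x = 0) (i : ZMod n) (m : ℕ) :
    |Pp g i m| ≤ ∑ x, |g x| := by
  induction m using Nat.strong_induction_on with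
  | _ m ih =>
    rcases le_or_gt m n with h | h
    · exact Pp_bound_small g i h
    · have hn : 0 < n := Nat.pos_of_ne_zero (NeZero.ne n)
      have : m = (m - n) + n := by omega
      rw [this, Pp_period g hg]
      exact ih (m - n) (by omega)

end psums

section core
variable {n : ℕ} [NeZero n] (g : ZMod n → ℝ) (i : ZMod n) (m : ℕ)

lemma Icc_sum_eq_Pp : ∑ k ∈ Finset.Icc 1 m, g (i + (k : ZMod n)) = Pp g i m := by
  rw [show Finset.Icc 1 m = Finset.Ico 1 (m + 1) by rfl, Finset.sum_Ico_eq_sum_range]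
  simp only [Nat.add_sub_cancel]
  apply Finset.sum_congr rfl
  intro j _
  have : ((1 + j : ℕ) : ZMod n) = 1 + (j : ZMod n) := by push_cast; ring
  rw [this, ← add_assoc]

lemma reflect_L1 :
    ∑ k ∈ Finset.Icc 1 m, (k : ℝ) * g (i + ((m + 1 - k : ℕ) : ZMod n))
      = ∑ k ∈ Finset.Icc 1 m, (((m : ℝ) + 1) - (k : ℝ)) * g (i + (k : ZMod n)) := by
  rw [show Finset.Icc 1 m = Finset.Ico 1 (m + 1) by rfl, Finset.sum_Ico_eq_sum_range,
    Finset.sum_Ico_eq_sum_range]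
  simp only [Nat.add_sub_cancel]
  rw [← Finset.sum_range_reflect
    (fun j => ((1 + j : ℕ) : ℝ) * g (i + ((m + 1 - (1 + j) : ℕ) : ZMod n))) m]
  apply Finset.sum_congr rfl
  intro j hj
  have hj' : j < m := Finset.mem_range.1 hj
  have e1 : 1 + (m - 1 - j) = m - j := by omega
  have e2 : m + 1 - (1 + (m - 1 - j)) = 1 + j := by omega
  rw [e1]
  have e2' : m + 1 - (m - j) = 1 + j := by omega
  rw [e2']
  have e3 : ((m - j : ℕ) : ℝ) = (m : ℝ) - (j : ℝ) := by
    have : j ≤ m := le_of_lt hj'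
    push_cast [this]; ring
  have e4 : ((1 + j : ℕ) : ℝ) = 1 + (j : ℝ) := by push_cast; ring
  rw [e3, e4]
  ring_nf

lemma swap_L2 (h : ℕ → ℝ) :
    ∑ k ∈ Finset.Icc 1 m, (((m : ℝ) + 1) - (k : ℝ)) * h k
      = ∑ t ∈ Finset.range m, ∑ k ∈ Finset.Icc 1 (t + 1), h k := by
  rw [Finset.sum_comm' (s := Finset.range m) (t := fun t => Finset.Icc 1 (t + 1))
    (t' := Finset.Icc 1 m) (s' := fun k => Finset.Ico (k - 1) m)
    (f := fun _ k => h k)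
    (by intro t k; simp only [Finset.mem_range, Finset.mem_Icc, Finset.mem_Ico]; omega)]
  apply Finset.sum_congr rfl
  intro k hk
  rw [Finset.sum_const, Nat.card_Ico, nsmul_eq_mul]
  simp only [Finset.mem_Icc] at hk
  have h1 : 1 ≤ k := hk.1
  have h2 : k ≤ m := hk.2
  have e5 : m - (k - 1) = m + 1 - k := by omega
  have : ((m - (k - 1) : ℕ) : ℝ) = (m : ℝ) + 1 - (k : ℝ) := by
    rw [e5, Nat.cast_sub (by omega)]
    push_cast; ring
  rw [this]

end core

section bounds
variable {n : ℕ} [NeZero n] (g : ZMod n → ℝ) (i : ZMod n)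

lemma neg_comp_sum (F : ZMod n → ℝ) : ∑ x : ZMod n, F (-x) = ∑ x, F x :=
  Fintype.sum_equiv (Equiv.neg _) _ _ (fun _ => rfl)

lemma mixA_repr (m : ℕ) :
    mixA n g i (m + 1) = (1 / ((m : ℝ) + 1)) *
      ∑ t ∈ range m, (Pp (fun x => g (-x)) (-i) (t + 1) + Pp g i (t + 1)) := by
  unfold mixA
  rw [Nat.add_sub_cancel]
  congr 1
  · push_cast; ring
  have hcast : ∀ k : ℕ, ((m + 1 : ℕ) : ℝ) - (k : ℝ) = ((m : ℝ) + 1) - (k : ℝ) := by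
    intro k; push_cast; ring
  rw [Finset.sum_add_distrib]
  have h2 := reflect_L1 g i m
  push_cast at h2 ⊢
  rw [h2, ← Finset.sum_add_distrib]
  have hcomb : ∑ k ∈ Finset.Icc 1 m,
      ((((m : ℝ) + 1) - (k : ℝ)) * g (i - (k : ZMod n))
        + (((m : ℝ) + 1) - (k : ℝ)) * g (i + (k : ZMod n)))
      = ∑ k ∈ Finset.Icc 1 m, (((m : ℝ) + 1) - (k : ℝ))
          * (g (i - (k : ZMod n)) + g (i + (k : ZMod n))) := by
    apply Finset.sum_congr rfl; intro k _; ring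
  rw [hcomb, swap_L2 m (fun k => g (i - (k : ZMod n)) + g (i + (k : ZMod n)))]
  apply Finset.sum_congr rfl
  intro t _
  rw [Finset.sum_add_distrib]
  congr 1
  · rw [← Icc_sum_eq_Pp (fun x => g (-x)) (-i) (t + 1)]
    apply Finset.sum_congr rfl
    intro k _
    simp [neg_add, sub_eq_add_neg, add_comm]
  · exact Icc_sum_eq_Pp g i (t + 1)

lemma mixA_bound (hg : ∑ x, g x = 0) (K : ℕ) :
    |mixA n g i K| ≤ 2 * ∑ x, |g x| := by
  set C := ∑ x, |g x| with hC
  have hC0 : 0 ≤ C := Finset.sum_nonneg (fun x _ => abs_nonneg _)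
  cases K with
  | zero => simp [mixA]; positivity
  | succ m =>
    rw [mixA_repr]
    have hg' : ∑ x : ZMod n, g (-x) = 0 := by rw [neg_comp_sum]; exact hg
    have hC' : ∑ x : ZMod n, |g (-x)| = C := neg_comp_sum (fun x => |g x|)
    have hb : |∑ t ∈ range m, (Pp (fun x => g (-x)) (-i) (t + 1) + Pp g i (t + 1))|
        ≤ (m : ℝ) * (2 * C) := by
      refine (Finset.abs_sum_le_sum_abs _ _).trans ?_
      have : ∀ t ∈ range m, |Pp (fun x => g (-x)) (-i) (t + 1) + Pp g i (t + 1)| ≤ 2 * C := by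
        intro t _
        refine (abs_add_le _ _).trans ?_
        have b1 := Pp_bound (fun x => g (-x)) hg' (-i) (t + 1)
        rw [hC'] at b1
        have b2 := Pp_bound g hg i (t + 1)
        rw [← hC] at b2
        linarith
      refine (Finset.sum_le_sum this).trans ?_
      rw [Finset.sum_const, Finset.card_range, nsmul_eq_mul]
    rw [abs_mul]
    have h1 : |1 / ((m : ℝ) + 1)| = 1 / ((m : ℝ) + 1) := by
      rw [abs_of_nonneg]; positivity
    rw [h1]
    have hm1 : (0 : ℝ) < (m : ℝ) + 1 := by positivity
    calc 1 / ((m : ℝ) + 1) * |∑ t ∈ range m, _| ≤ 1 / ((m : ℝ) + 1) * ((m : ℝ) * (2 * C)) := by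
          apply mul_le_mul_of_nonneg_left hb; positivity
      _ ≤ 2 * C := by
          rw [div_mul_eq_mul_div, one_mul, div_le_iff₀ hm1]
          nlinarith [Nat.cast_nonneg (α := ℝ) m]

lemma mixS_bound (hg : ∑ x, g x = 0) (K : ℕ) :
    |mixS n g i K| ≤ 2 * (∑ x, |g x|) * K := by
  induction K with
  | zero => simp [mixS]
  | succ K ih =>
    have := mixA_bound g i hg (K + 1)
    rw [show mixS n g i (K + 1) = mixS n g i K + mixA n g i (K + 1) from rfl]
    refine (abs_add_le _ _).trans ?_
    push_cast
    have hC0 : 0 ≤ ∑ x, |g x| := Finset.sum_nonneg (fun x _ => abs_nonneg _)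
    nlinarith

lemma mixF_bound (hg : ∑ x, g x = 0) (K : ℕ) (hK : 1 ≤ K) :
    |mixF n g K i| ≤ 8 * (∑ x, |g x|) / ((K : ℝ) + 3) := by
  set C := ∑ x, |g x| with hC
  have hC0 : 0 ≤ C := Finset.sum_nonneg (fun x _ => abs_nonneg _)
  have hgi : |g i| ≤ C :=
    Finset.single_le_sum (f := fun x => |g x|) (fun x _ => abs_nonneg _) (Finset.mem_univ i)
  have hKpos : (0 : ℝ) < (K : ℝ) := by exact_mod_cast hK
  have hK3 : (0 : ℝ) < (K : ℝ) + 3 := by positivity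
  unfold mixF
  rw [abs_mul]
  have hS := mixS_bound g i hg K
  rw [← hC] at hS
  have habs : |2 / ((K : ℝ) * ((K : ℝ) + 3))| = 2 / ((K : ℝ) * ((K : ℝ) + 3)) := by
    rw [abs_of_nonneg]; positivity
  rw [habs]
  have hin : |2 * (K : ℝ) * g i + mixS n g i K| ≤ 4 * C * (K : ℝ) := by
    refine (abs_add_le _ _).trans ?_
    rw [abs_mul, abs_mul, abs_of_nonneg (by norm_num : (0:ℝ) ≤ 2), abs_of_nonneg hKpos.le]
    nlinarith
  calc 2 / ((K : ℝ) * ((K : ℝ) + 3)) * |2 * (K : ℝ) * g i + mixS n g i K|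
      ≤ 2 / ((K : ℝ) * ((K : ℝ) + 3)) * (4 * C * (K : ℝ)) := by
        apply mul_le_mul_of_nonneg_left hin; positivity
    _ = 8 * C / ((K : ℝ) + 3) := by field_simp; ring

end bounds

section shift
variable {n : ℕ} [NeZero n] (y : ZMod n → ℝ) (i : ZMod n)

lemma sum_z_zero :
    ∑ x : ZMod n, (y x - trainMean n y) = 0 := by
  have hn : ((n : ℝ)) ≠ 0 := Nat.cast_ne_zero.2 (NeZero.ne n)
  rw [Finset.sum_sub_distrib, Finset.sum_const, Finset.card_univ, ZMod.card, nsmul_eq_mul,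
    trainMean]
  field_simp
  ring

lemma mixA_shift (K : ℕ) (hK : 1 ≤ K) :
    mixA n y i K = mixA n (fun j => y j - trainMean n y) i K + ((K : ℝ) - 1) * trainMean n y := by
  set tm := trainMean n y with htm
  have hKR : ((K : ℝ)) ≠ 0 := (Nat.cast_pos.2 hK).ne'
  unfold mixA
  have hsum : ∑ k ∈ Finset.Icc 1 (K - 1),
        (((K : ℝ) - (k : ℝ)) * y (i - (k : ZMod n)) + (k : ℝ) * y (i + ((K - k : ℕ) : ZMod n)))
      = (∑ k ∈ Finset.Icc 1 (K - 1),
          (((K : ℝ) - (k : ℝ)) * (y (i - (k : ZMod n)) - tm)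
            + (k : ℝ) * (y (i + ((K - k : ℕ) : ZMod n)) - tm)))
        + ((K - 1 : ℕ) : ℝ) * ((K : ℝ) * tm) := by
    have hterm : ∀ k ∈ Finset.Icc 1 (K - 1),
        ((K : ℝ) - (k : ℝ)) * y (i - (k : ZMod n)) + (k : ℝ) * y (i + ((K - k : ℕ) : ZMod n))
        = (((K : ℝ) - (k : ℝ)) * (y (i - (k : ZMod n)) - tm)
            + (k : ℝ) * (y (i + ((K - k : ℕ) : ZMod n)) - tm)) + (K : ℝ) * tm := by
      intro k _; ring
    rw [Finset.sum_congr rfl hterm, Finset.sum_add_distrib, Finset.sum_const, Nat.card_Icc,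
      nsmul_eq_mul]
    norm_num
  rw [hsum, mul_add]
  congr 1
  rw [Nat.cast_sub hK]
  field_simp
  ring

lemma mixS_shift (K : ℕ) :
    mixS n y i K = mixS n (fun j => y j - trainMean n y) i K
      + ((K : ℝ) * ((K : ℝ) - 1) / 2) * trainMean n y := by
  induction K with
  | zero => simp [mixS]
  | succ K ih =>
    rw [show mixS n y i (K + 1) = mixS n y i K + mixA n y i (K + 1) from rfl,
      show mixS n (fun j => y j - trainMean n y) i (K + 1)
        = mixS n (fun j => y j - trainMean n y) i K
          + mixA n (fun j => y j - trainMean n y) i (K + 1) from rfl,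
      ih, mixA_shift y i (K + 1) (Nat.le_add_left 1 K)]
    push_cast
    ring

lemma mixF_shift (K : ℕ) (hK : 1 ≤ K) :
    mixF n y K i = mixF n (fun j => y j - trainMean n y) K i + trainMean n y := by
  have hKR : (0 : ℝ) < (K : ℝ) := Nat.cast_pos.2 hK
  unfold mixF
  rw [mixS_shift y i K]
  set tm := trainMean n y
  set S := mixS n (fun j => y j - trainMean n y) i K
  field_simp
  ring

end shift

open Filter in
lemma mixF_tendsto (n : ℕ) [NeZero n] (y : ZMod n → ℝ) (i : ZMod n) :
    Tendsto (fun K : ℕ => mixF n y K i) atTop (nhds (trainMean n y)) := by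
  set tm := trainMean n y with htm
  set z : ZMod n → ℝ := fun j => y j - tm with hz
  have hzsum : ∑ x, z x = 0 := sum_z_zero y
  set C := ∑ x, |z x| with hC
  have hC0 : 0 ≤ C := Finset.sum_nonneg (fun x _ => abs_nonneg _)
  have hz0 : Tendsto (fun K : ℕ => mixF n z K i) atTop (nhds 0) := by
    apply squeeze_zero_norm' (a := fun K : ℕ => 8 * C / (K : ℝ))
    · filter_upwards [Filter.eventually_ge_atTop 1] with K hK
      have h1 := mixF_bound z i hzsum K hK
      rw [← hC] at h1
      have hKp : (0 : ℝ) < (K : ℝ) := Nat.cast_pos.2 hK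
      have : 8 * C / ((K : ℝ) + 3) ≤ 8 * C / (K : ℝ) := by
        apply div_le_div_of_nonneg_left (by positivity) hKp (by linarith)
      calc ‖mixF n z K i‖ = |mixF n z K i| := rfl
        _ ≤ 8 * C / ((K : ℝ) + 3) := h1
        _ ≤ 8 * C / (K : ℝ) := this
    · exact tendsto_const_div_atTop_nhds_zero_nat (8 * C)
  have heq : ∀ᶠ K : ℕ in atTop, mixF n z K i + tm = mixF n y K i := by
    filter_upwards [Filter.eventually_ge_atTop 1] with K hK
    exact (mixF_shift y i K hK).symm
  have := (hz0.add tendsto_const_nhds : Tendsto (fun K : ℕ => mixF n z K i + tm)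
    atTop (nhds (0 + tm)))
  rw [zero_add] at this
  exact Tendsto.congr' heq this


open Filter in
/-- In the periodic 1D setting, the training variance of the Local Mixup
minimizer converges to `0` as `K → ∞`. -/
theorem localMixup_variance_limit (n : ℕ) [NeZero n] (y : ZMod n → ℝ) :
    Tendsto (fun K : ℕ => trainVar n (mixF n y K)) atTop (nhds 0) := by
  set tm := trainMean n y with htm
  have hlim : ∀ j : ZMod n, Tendsto (fun K : ℕ => mixF n y K j) atTop (nhds tm) :=
    fun j => mixF_tendsto n y j
  have hmean : Tendsto (fun K : ℕ => (1 / (n : ℝ)) * ∑ j, mixF n y K j) atTop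
      (nhds ((1 / (n : ℝ)) * ∑ _j : ZMod n, tm)) :=
    (tendsto_finset_sum _ (fun j _ => hlim j)).const_mul _
  have key : Tendsto (fun K : ℕ => trainVar n (mixF n y K)) atTop
      (nhds ((1 / (n : ℝ)) * ∑ i : ZMod n, (tm - (1 / (n : ℝ)) * ∑ _j : ZMod n, tm) ^ 2)) := by
    unfold trainVar
    exact (tendsto_finset_sum _ (fun i _ => ((hlim i).sub hmean).pow 2)).const_mul _
  have hval : (1 / (n : ℝ)) * ∑ i : ZMod n, (tm - (1 / (n : ℝ)) * ∑ _j : ZMod n, tm) ^ 2 = 0 := by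
    have hn : ((n : ℝ)) ≠ 0 := Nat.cast_ne_zero.2 (NeZero.ne n)
    have hin : tm - (1 / (n : ℝ)) * ∑ _j : ZMod n, tm = 0 := by
      rw [Finset.sum_const, Finset.card_univ, ZMod.card, nsmul_eq_mul]
      field_simp
      ring
    rw [hin]
    simp
  rwa [hval] at key
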